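/- arXiv:1410.2501 — 2 statements merged into one kernel-verified Lean document; each statement's English description precedes it below -/
import Mathlib

section
/- The protocol Opt_0 solves consensus in the crash-failure model with at most t < n failures: it satisfies Decision (every correct process decides, by time t+1 at the latest), Validity, and Agreement. -/
attribute [local instance] Classical.propDecidable

/-- An adversary in the synchronous crash-failure model: an input vector of binary
initial values, a failure pattern given by the delivery relation `F` (`F m j i` means
the message sent by `j` at time `m` is delivered to `i` at time `m+1`, i.e. in round `m+1`),
and a crash round for each process (`⊤` meaning the process never crashes).
A process behaves correctly before its crashing round and sends nothing afterwards;
during its crashing round it may send to an arbitrary subset. -/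
structure Adversary (n : ℕ) where
  init : Fin n → Bool
  F : ℕ → Fin n → Fin n → Prop
  crash : Fin n → ℕ∞
  crash_pos : ∀ j, 1 ≤ crash j
  before_crash : ∀ (m : ℕ) (j i : Fin n), ((m + 1 : ℕ) : ℕ∞) < crash j → F m j i
  after_crash : ∀ (m : ℕ) (j i : Fin n), crash j < ((m + 1 : ℕ) : ℕ∞) → ¬ F m j i

namespace Adversary

variable {n : ℕ}

/-- A process is faulty if it crashes at some point. -/
def Faulty (A : Adversary n) (j : Fin n) : Prop := A.crash j ≠ ⊤

/-- The number `f` of actual failures in the run determined by the adversary. -/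
noncomputable def numFaults (A : Adversary n) : ℕ := {j | A.Faulty j}.ncard

/-- A process is active at time `m` if it has not crashed before time `m`. -/
def Active (A : Adversary n) (j : Fin n) (m : ℕ) : Prop := ((m : ℕ) : ℕ∞) < A.crash j

end Adversary

/-- `Seen A ⟨j,ℓ⟩ ⟨i,m⟩`: node `⟨j,ℓ⟩` is in the view (communication graph) of node
`⟨i,m⟩`, i.e. there is a message chain from `⟨j,ℓ⟩` to `⟨i,m⟩`. -/
inductive Seen {n : ℕ} (A : Adversary n) : Fin n × ℕ → Fin n × ℕ → Prop
  | refl (p : Fin n × ℕ) : Seen A p p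
  | self {p : Fin n × ℕ} {i : Fin n} {m : ℕ} : Seen A p (i, m) → Seen A p (i, m + 1)
  | step {p : Fin n × ℕ} {j i : Fin n} {m : ℕ} : Seen A p (j, m) → A.F m j i →
      Seen A p (i, m + 1)

open Adversary

/-- Two adversaries give process `i` the same view at time `m` in a full-information
protocol: the same nodes are seen, with the same initial values at seen time-0 nodes
and the same incoming edges at seen later nodes. -/
def sameView {n : ℕ} (A B : Adversary n) (i : Fin n) (m : ℕ) : Prop :=
  (∀ p, Seen A p (i, m) ↔ Seen B p (i, m)) ∧
  (∀ j, Seen A (j, 0) (i, m) → A.init j = B.init j) ∧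
  (∀ (k : ℕ) (j j' : Fin n), Seen A (j', k + 1) (i, m) → (A.F k j j' ↔ B.F k j j'))

/-- The local state of (active) process `i` at time `m` is the same under both
adversaries: `i` is active in both and has the same full-information view. -/
def sameLocal {n : ℕ} (A B : Adversary n) (i : Fin n) (m : ℕ) : Prop :=
  A.Active i m ∧ B.Active i m ∧ sameView A B i m

/-- The runs of the system are those generated by adversaries with at most `t` crashes. -/
def Valid {n : ℕ} (t : ℕ) (A : Adversary n) : Prop := A.numFaults ≤ t

/-- Knowledge in the full-information protocol: `i` knows the fact `φ` at time `m`
iff `φ` holds at time `m` in every run (with at most `t` failures) in which `i` has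
the same local state. -/
def Knows {n : ℕ} (t : ℕ) (φ : Adversary n → ℕ → Prop) (A : Adversary n) (i : Fin n)
    (m : ℕ) : Prop :=
  ∀ B : Adversary n, Valid t B → sameLocal A B i m → φ B m

/-- The fact `∃v`: some process has initial value `v`. -/
def existsVal {n : ℕ} (v : Bool) : Adversary n → ℕ → Prop := fun A _ => ∃ j, A.init j = v

/-- Node `⟨j',m'⟩` is revealed to `⟨i,m⟩`: either it is seen by `⟨i,m⟩`, or for some
seen node `⟨i',m'⟩` the edge `(⟨j',m'-1⟩,⟨i',m'⟩)` is absent from `i`'s view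
(proving that `j'` crashed before time `m'`). -/
def RevealedNode {n : ℕ} (A : Adversary n) (j' : Fin n) (m' : ℕ) (i : Fin n) (m : ℕ) :
    Prop :=
  Seen A (j', m') (i, m) ∨
  ∃ (i' : Fin n) (k : ℕ), m' = k + 1 ∧ Seen A (i', k + 1) (i, m) ∧ ¬ A.F k j' i'

/-- Time `k` is revealed to `⟨i,m⟩` if every node `⟨j',k⟩` is revealed to `⟨i,m⟩`. -/
def RevealedTime {n : ℕ} (A : Adversary n) (k : ℕ) (i : Fin n) (m : ℕ) : Prop :=
  ∀ j', RevealedNode A j' k i m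

/-- A hidden path w.r.t. `⟨i,m⟩`: for each `k ≤ m` a node `⟨j_k,k⟩` not revealed to `⟨i,m⟩`. -/
def HiddenPath {n : ℕ} (A : Adversary n) (i : Fin n) (m : ℕ) : Prop :=
  ∃ js : ℕ → Fin n, ∀ k ≤ m, ¬ RevealedNode A (js k) k i m

/-- `not-known(∃0)`: no process active at time `m` knows `∃0`. -/
def notKnown0 {n : ℕ} (t : ℕ) : Adversary n → ℕ → Prop :=
  fun A m => ∀ j, A.Active j m → ¬ Knows t (existsVal false) A j m

/-- A (full-information, deterministic) decision protocol, described by the decision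
status function: `P A i m = some v` iff by time `m` process `i` has decided `v`
in the run determined by adversary `A`. -/
abbrev ProtoDec (n : ℕ) : Type := Adversary n → Fin n → ℕ → Option Bool

/-- Sanity conditions making a decision-status function a protocol: decisions are
irrevocable, and (for active processes) depend only on the local state. -/
def IsProtocol {n : ℕ} (t : ℕ) (P : ProtoDec n) : Prop :=
  (∀ A i m v, P A i m = some v → P A i (m + 1) = some v) ∧
  (∀ A B i m, Valid t A → Valid t B → sameLocal A B i m → P A i m = P B i m)

/-- Process `i` performs the action `decide(v)` at time `m`: it is decided on `v`
at `m` and was undecided before. -/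
def DecidesAt {n : ℕ} (P : ProtoDec n) (A : Adversary n) (i : Fin n) (m : ℕ) (v : Bool) :
    Prop :=
  P A i m = some v ∧ ∀ k < m, P A i k = none

/-- Decision: every correct process eventually decides. -/
def Decision {n : ℕ} (t : ℕ) (P : ProtoDec n) : Prop :=
  ∀ A : Adversary n, Valid t A → ∀ i, ¬ A.Faulty i → ∃ m, P A i m ≠ none

/-- Validity: if all initial values are `v` then correct processes decide `v`. -/
def Validity {n : ℕ} (t : ℕ) (P : ProtoDec n) : Prop :=
  ∀ A : Adversary n, Valid t A → ∀ v : Bool, (∀ j, A.init j = v) →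
    ∀ i m w, ¬ A.Faulty i → P A i m = some w → w = v

/-- Agreement: all correct processes decide on the same value. -/
def Agreement {n : ℕ} (t : ℕ) (P : ProtoDec n) : Prop :=
  ∀ A : Adversary n, Valid t A → ∀ i j m m' v w, ¬ A.Faulty i → ¬ A.Faulty j →
    P A i m = some v → P A j m' = some w → v = w

def ConsensusSolves {n : ℕ} (t : ℕ) (P : ProtoDec n) : Prop :=
  Decision t P ∧ Validity t P ∧ Agreement t P

/-- Uniform Agreement: all processes that decide (faulty or not) decide the same value. -/
def UniformAgreement {n : ℕ} (t : ℕ) (P : ProtoDec n) : Prop :=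
  ∀ A : Adversary n, Valid t A → ∀ i j m m' v w,
    P A i m = some v → P A j m' = some w → v = w

def UniformConsensusSolves {n : ℕ} (t : ℕ) (P : ProtoDec n) : Prop :=
  Decision t P ∧ Validity t P ∧ UniformAgreement t P

/-- `Q` dominates `P`: for every adversary and process, if `i` has decided by time `m`
in `P` then `i` has decided by time `m` in `Q`. -/
def Dominates {n : ℕ} (t : ℕ) (Q P : ProtoDec n) : Prop :=
  ∀ A : Adversary n, Valid t A → ∀ i m, P A i m ≠ none → Q A i m ≠ none

def StrictlyDominates {n : ℕ} (t : ℕ) (Q P : ProtoDec n) : Prop :=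
  Dominates t Q P ∧ ¬ Dominates t P Q

/-- Turn a per-time decision rule into a decision-status function (the first decision
taken is kept forever). -/
def runDec (step : ℕ → Option Bool) : ℕ → Option Bool
  | 0 => step 0
  | m + 1 => (runDec step m).elim (step (m + 1)) some

/-- The protocol `P₀`: decide 0 as soon as `K_i ∃0` holds, otherwise decide 1 at time `t+1`. -/
noncomputable def P0 (n t : ℕ) : ProtoDec n := fun A i =>
  runDec fun m =>
    if Knows t (existsVal false) A i m then some false
    else if m = t + 1 then some true
    else none

/-- The unbeatable protocol `Opt₀`: decide 0 as soon as `K_i ∃0` holds, and decide 1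
as soon as `K_i not-known(∃0)` holds. -/
noncomputable def Opt0 (n t : ℕ) : ProtoDec n := fun A i =>
  runDec fun m =>
    if Knows t (existsVal false) A i m then some false
    else if Knows t (notKnown0 t) A i m then some true
    else none

/-- The number of processes with initial value `false` (0). -/
noncomputable def zeros {n : ℕ} (A : Adversary n) : ℕ :=
  (Finset.univ.filter fun j => A.init j = false).card

/-- The number of processes with initial value `true` (1). -/
noncomputable def ones {n : ℕ} (A : Adversary n) : ℕ :=
  (Finset.univ.filter fun j => A.init j = true).card

/-- The fact `Maj = 0`: at least `n/2` initial values are 0. -/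
def Maj0 (n : ℕ) : Adversary n → ℕ → Prop := fun A _ => n ≤ 2 * zeros A

/-- The fact `Maj = 1`: strictly more than `n/2` initial values are 1. -/
def Maj1 (n : ℕ) : Adversary n → ℕ → Prop := fun A _ => n < 2 * ones A

noncomputable def seenZeros {n : ℕ} (A : Adversary n) (i : Fin n) (m : ℕ) : ℕ :=
  (Finset.univ.filter fun j => Seen A (j, 0) (i, m) ∧ A.init j = false).card

noncomputable def seenOnes {n : ℕ} (A : Adversary n) (i : Fin n) (m : ℕ) : ℕ :=
  (Finset.univ.filter fun j => Seen A (j, 0) (i, m) ∧ A.init j = true).card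

/-- `Maj(vals(i,m))`: 0 if at least half of the initial values known to `i` at `m`
are 0, and 1 otherwise. -/
noncomputable def MajSeen {n : ℕ} (A : Adversary n) (i : Fin n) (m : ℕ) : Bool :=
  if seenOnes A i m ≤ seenZeros A i m then false else true

/-- The unbeatable majority consensus protocol `Opt_Maj`. -/
noncomputable def OptMaj (n t : ℕ) : ProtoDec n := fun A i =>
  runDec fun m =>
    if Knows t (Maj0 n) A i m then some false
    else if Knows t (Maj1 n) A i m then some true
    else if ∃ k ≤ m, RevealedTime A k i m then some (MajSeen A i m)
    else none

/-- The fact `∀1`: all initial values are 1. -/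
def all1 (n : ℕ) : Adversary n → ℕ → Prop := fun A _ => ∀ j, A.init j = true

/-- The sender set of `i` repeats at `⟨i,m⟩`: `i` hears from the same set of processes
in rounds `m-1` and `m` (only meaningful for `m ≥ 2`). -/
def senderSetRepeats {n : ℕ} (A : Adversary n) (i : Fin n) (m : ℕ) : Prop :=
  ∀ j, (A.F (m - 2) j i ↔ A.F (m - 1) j i)

/-- The protocol `P0_opt` of Halpern, Moses and Waarts. -/
noncomputable def P0opt (n t : ℕ) : ProtoDec n := fun A i =>
  runDec fun m =>
    if Knows t (existsVal false) A i m then some false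
    else if Knows t (all1 n) A i m ∨ (2 ≤ m ∧ senderSetRepeats A i m) then some true
    else none

/-- The fact `∃correct(v)`: some correct (never-failing) process knows `∃v`. -/
def ExistsCorrectKnows {n : ℕ} (t : ℕ) (v : Bool) : Adversary n → ℕ → Prop :=
  fun A m => ∃ j, ¬ A.Faulty j ∧ Knows t (existsVal v) A j m

/-- The number `d` of failures process `i` knows of at time `m`: the number of
processes `j ≠ i` from which `i` receives no message in round `m`. -/
noncomputable def knownFaults {n : ℕ} (A : Adversary n) (i : Fin n) : ℕ → ℕ
  | 0 => 0
  | m + 1 => (Finset.univ.filter fun j => j ≠ i ∧ ¬ A.F m j i).card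

/-- The protocol `u-P₀` for uniform consensus: decide 0 as soon as
`K_i ∃correct(0)` holds, otherwise decide 1 at time `t+1`. -/
noncomputable def uP0 (n t : ℕ) : ProtoDec n := fun A i =>
  runDec fun m =>
    if Knows t (ExistsCorrectKnows t false) A i m then some false
    else if m = t + 1 then some true
    else none

/-- The unbeatable uniform consensus protocol `u-Opt₀`. -/
noncomputable def uOpt0 (n t : ℕ) : ProtoDec n := fun A i =>
  runDec fun m =>
    if Knows t (ExistsCorrectKnows t false) A i m then some false
    else if ¬ Knows t (existsVal false) A i m ∧ ∃ k ≤ m, RevealedTime A k i m then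
      some true
    else none

/-- All decisions in the run `P[A]` are taken at or before time `m`. -/
def AllDecidedBy {n : ℕ} (P : ProtoDec n) (A : Adversary n) (m : ℕ) : Prop :=
  ∀ i k, P A i k ≠ none → P A i m ≠ none

/-- `Q` last-decider dominates `P`. -/
def LDDominates {n : ℕ} (t : ℕ) (Q P : ProtoDec n) : Prop :=
  ∀ A : Adversary n, Valid t A → ∀ m, AllDecidedBy P A m → AllDecidedBy Q A m

/-- A 0-chain for `⟨i,m⟩`: distinct processes `j₀,…,j_d = i` with `d ≤ m`, `j₀` having
initial value 0, and `j_k` receiving a message from `j_{k-1}` at time `k` (round `k`). -/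
def ZeroChain {n : ℕ} (A : Adversary n) (i : Fin n) (m : ℕ) : Prop :=
  ∃ d ≤ m, ∃ js : ℕ → Fin n, js d = i ∧
    (∀ k ≤ d, ∀ l ≤ d, js k = js l → k = l) ∧
    A.init (js 0) = false ∧
    ∀ k, 1 ≤ k → k ≤ d → A.F (k - 1) (js (k - 1)) (js k)

section Opt0Aux

open Adversary

variable {n : ℕ}

lemma seen_of_F_imp {A B : Adversary n} (hF : ∀ m j i, A.F m j i → B.F m j i)
    {p q : Fin n × ℕ} (h : Seen A p q) : Seen B p q := by
  induction h with
  | refl => exact Seen.refl _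
  | self _ ih => exact Seen.self ih
  | step _ hf ih => exact Seen.step ih (hF _ _ _ hf)

lemma seen_mono {A : Adversary n} {p : Fin n × ℕ} {i : Fin n} {m m' : ℕ}
    (h : Seen A p (i, m)) (hm : m ≤ m') : Seen A p (i, m') := by
  induction m', hm using Nat.le_induction with
  | base => exact h
  | succ k hk ih => exact Seen.self ih

lemma seen_self0 {A : Adversary n} (i : Fin n) (m : ℕ) : Seen A (i, 0) (i, m) :=
  seen_mono (Seen.refl _) (Nat.zero_le _)

lemma seen_inv {A : Adversary n} {p x : Fin n × ℕ} (h : Seen A p x) :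
    p = x ∨ ∃ (i : Fin n) (m : ℕ), x = (i, m + 1) ∧
      (Seen A p (i, m) ∨ ∃ j, Seen A p (j, m) ∧ A.F m j i) := by
  cases h with
  | refl => exact Or.inl rfl
  | self h => exact Or.inr ⟨_, _, rfl, Or.inl h⟩
  | step h hf => exact Or.inr ⟨_, _, rfl, Or.inr ⟨_, h, hf⟩⟩

lemma active_mono {A : Adversary n} {j : Fin n} {m m' : ℕ} (hm : m ≤ m')
    (h : A.Active j m') : A.Active j m :=
  lt_of_le_of_lt (by exact_mod_cast hm) h

lemma active_of_not_faulty {A : Adversary n} {i : Fin n} (h : ¬ A.Faulty i) (m : ℕ) :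
    A.Active i m := by
  have ht : A.crash i = ⊤ := not_not.mp h
  rw [Adversary.Active, ht]
  exact lt_top_iff_ne_top.mpr (by simp)

lemma crash_ge_of_F {A : Adversary n} {m : ℕ} {q j : Fin n} (hF : A.F m q j) :
    ((m + 1 : ℕ) : ℕ∞) ≤ A.crash q :=
  not_lt.mp (fun hc => A.after_crash m q j hc hF)

lemma active_of_F {A : Adversary n} {m : ℕ} {q j : Fin n} (hF : A.F m q j) :
    A.Active q m :=
  lt_of_lt_of_le (by exact_mod_cast Nat.lt_succ_self m) (crash_ge_of_F hF)

lemma knows_self {t : ℕ} {φ : Adversary n → ℕ → Prop} {A : Adversary n} {i : Fin n}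
    {m : ℕ} (hA : Valid t A) (hi : A.Active i m) (h : Knows t φ A i m) : φ A m :=
  h A hA ⟨hi, hi, fun _ => Iff.rfl, fun _ _ => rfl, fun _ _ _ _ => Iff.rfl⟩

lemma knows0_of_seen {t : ℕ} {A : Adversary n} {i : Fin n} {m : ℕ}
    (h : ∃ j, Seen A (j, 0) (i, m) ∧ A.init j = false) :
    Knows t (existsVal false) A i m := by
  obtain ⟨j, hs, h0⟩ := h
  intro B hB hloc
  refine ⟨j, ?_⟩
  rw [← hloc.2.2.2.1 j hs]
  exact h0

/-- Auxiliary adversary: same as `A` but with all initial values not seen by `⟨i,m⟩`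
replaced by `true`. -/
noncomputable def maskInit (A : Adversary n) (i : Fin n) (m : ℕ) : Adversary n where
  init := fun j => if Seen A (j, 0) (i, m) then A.init j else true
  F := A.F
  crash := A.crash
  crash_pos := A.crash_pos
  before_crash := A.before_crash
  after_crash := A.after_crash

lemma seen0_of_knows {t : ℕ} {A : Adversary n} {i : Fin n} {m : ℕ}
    (hA : Valid t A) (hact : A.Active i m)
    (h : Knows t (existsVal false) A i m) :
    ∃ j, Seen A (j, 0) (i, m) ∧ A.init j = false := by
  have hseen : ∀ p q, Seen A p q ↔ Seen (maskInit A i m) p q :=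
    fun p q => ⟨seen_of_F_imp (A := A) (B := maskInit A i m) (fun _ _ _ h => h),
      seen_of_F_imp (A := maskInit A i m) (B := A) (fun _ _ _ h => h)⟩
  have hBval : Valid t (maskInit A i m) := hA
  have hloc : sameLocal A (maskInit A i m) i m := by
    refine ⟨hact, hact, fun p => hseen p (i, m), ?_, fun _ _ _ _ => Iff.rfl⟩
    intro j hj
    show A.init j = if Seen A (j, 0) (i, m) then A.init j else true
    rw [if_pos hj]
  obtain ⟨j, hj⟩ := h (maskInit A i m) hBval hloc
  by_cases hs : Seen A (j, 0) (i, m)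
  · refine ⟨j, hs, ?_⟩
    have : (maskInit A i m).init j = A.init j := if_pos hs
    rw [← this]; exact hj
  · exfalso
    have : (maskInit A i m).init j = true := if_neg hs
    rw [this] at hj
    exact Bool.true_eq_false_eq_False hj

lemma exists_clean_round {t : ℕ} {A : Adversary n} (hn : 0 < n) (hA : Valid t A) :
    ∃ r : ℕ, 1 ≤ r ∧ r ≤ t + 1 ∧ ∀ j, A.crash j ≠ (r : ℕ∞) := by
  by_contra hcon
  push_neg at hcon
  have hc : ∀ r : ℕ, ∃ j : Fin n, 1 ≤ r → r ≤ t + 1 → A.crash j = (r : ℕ∞) := by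
    intro r
    by_cases h1 : 1 ≤ r ∧ r ≤ t + 1
    · obtain ⟨j, hj⟩ := hcon r h1.1 h1.2
      exact ⟨j, fun _ _ => hj⟩
    · exact ⟨⟨0, hn⟩, fun ha hb => absurd ⟨ha, hb⟩ h1⟩
  choose f hf using hc
  have hmaps : ∀ r ∈ Finset.Icc 1 (t + 1), f r ∈ Finset.univ.filter fun j => A.Faulty j := by
    intro r hr
    rw [Finset.mem_Icc] at hr
    have h := hf r hr.1 hr.2
    simp only [Finset.mem_filter, Finset.mem_univ, true_and]
    intro htop
    rw [htop] at h
    exact (ENat.coe_ne_top r) h.symm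
  have hinj : Set.InjOn f (Finset.Icc 1 (t + 1)) := by
    intro a ha b hb hab
    rw [Finset.coe_Icc, Set.mem_Icc] at ha hb
    have h1 := hf a ha.1 ha.2
    have h2 := hf b hb.1 hb.2
    rw [hab, h2] at h1
    exact_mod_cast h1.symm
  have hcard := Finset.card_le_card_of_injOn f hmaps hinj
  rw [Nat.card_Icc] at hcard
  have h2 : (Finset.univ.filter fun j => A.Faulty j).card = A.numFaults := by
    rw [Adversary.numFaults,
      show {j | A.Faulty j} = ((Finset.univ.filter fun j => A.Faulty j : Finset (Fin n)) :
        Set (Fin n)) by ext j; simp,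
      Set.ncard_coe_finset]
  rw [h2] at hcard
  have := hA
  rw [Valid] at this
  omega

lemma seen_reroute {A : Adversary n} {r : ℕ} (hr : 1 ≤ r)
    (clean : ∀ q, A.crash q ≠ (r : ℕ∞)) {p₀ x : Fin n × ℕ}
    (h : Seen A p₀ x) (h0 : p₀.2 = 0) :
    r ≤ x.2 → (r : ℕ∞) ≤ A.crash x.1 →
      ∃ q, Seen A p₀ (q, r - 1) ∧ (r : ℕ∞) < A.crash q := by
  induction h with
  | refl =>
    intro h1 _
    rw [h0] at h1
    omega
  | @self i m h ih =>
    intro h1 h2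
    have h1' : r ≤ m + 1 := h1
    have h2' : (r : ℕ∞) ≤ A.crash i := h2
    rcases Nat.lt_or_ge m r with hlt | hge
    · have hrm : r = m + 1 := by omega
      refine ⟨i, ?_, lt_of_le_of_ne h2' (Ne.symm (clean i))⟩
      rw [hrm]
      simpa using h
    · exact ih hge h2'
  | @step q i m h hF ih =>
    intro h1 _
    have h1' : r ≤ m + 1 := h1
    have hq : ((m + 1 : ℕ) : ℕ∞) ≤ A.crash q := crash_ge_of_F hF
    rcases Nat.lt_or_ge m r with hlt | hge
    · have hrm : r = m + 1 := by omega
      have hle : (r : ℕ∞) ≤ A.crash q := by rw [hrm]; exact hq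
      refine ⟨q, ?_, lt_of_le_of_ne hle (Ne.symm (clean q))⟩
      rw [hrm]
      simpa using h
    · refine ih hge (le_trans ?_ hq)
      exact_mod_cast Nat.le_succ_of_le hge

lemma not_seen0_of_active {t : ℕ} {A : Adversary n} (hn : 0 < n) (hA : Valid t A)
    {i : Fin n} (hi : A.Active i (t + 1))
    (hno : ∀ j₀, Seen A (j₀, 0) (i, t + 1) → A.init j₀ ≠ false)
    {j : Fin n} (hj : A.Active j (t + 1)) {j₀ : Fin n}
    (hseen : Seen A (j₀, 0) (j, t + 1)) : A.init j₀ ≠ false := by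
  intro h0
  obtain ⟨r, hr1, hr2, hclean⟩ := exists_clean_round hn hA
  have hcr : (r : ℕ∞) ≤ A.crash j := le_of_lt (lt_of_le_of_lt (by exact_mod_cast hr2) hj)
  obtain ⟨q, hq, hqc⟩ := seen_reroute hr1 hclean hseen rfl hr2 hcr
  have hF : A.F (r - 1) q i := by
    apply A.before_crash
    rwa [Nat.sub_add_cancel hr1]
  have hstep : Seen A (j₀, 0) (i, (r - 1) + 1) := Seen.step hq hF
  rw [Nat.sub_add_cancel hr1] at hstep
  exact hno j₀ (seen_mono hstep hr2) h0

lemma knows_notKnown0 {t : ℕ} {A : Adversary n} (hn : 0 < n) (hA : Valid t A)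
    {i : Fin n} (hi : A.Active i (t + 1))
    (hnk : ¬ Knows t (existsVal false) A i (t + 1)) :
    Knows t (notKnown0 t) A i (t + 1) := by
  intro B hB hloc
  obtain ⟨hAi, hBi, hview, hinit, hFv⟩ := hloc
  intro j hj hknows
  obtain ⟨j₀, hs, h0⟩ := seen0_of_knows hB hj hknows
  have hnoA : ∀ j₁, Seen A (j₁, 0) (i, t + 1) → A.init j₁ ≠ false := by
    intro j₁ hs1 h1
    exact hnk (knows0_of_seen ⟨j₁, hs1, h1⟩)
  have hnoB : ∀ j₁, Seen B (j₁, 0) (i, t + 1) → B.init j₁ ≠ false := by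
    intro j₁ hs1 h1
    have hsA : Seen A (j₁, 0) (i, t + 1) := (hview _).mpr hs1
    exact hnoA j₁ hsA ((hinit j₁ hsA).trans h1)
  exact not_seen0_of_active hn hB hBi hnoB hj hs h0

lemma notKnown0_mono {t : ℕ} {A : Adversary n} {m m' : ℕ} (hA : Valid t A)
    (hm : m ≤ m') (h : notKnown0 t A m) : notKnown0 t A m' := by
  induction m', hm using Nat.le_induction with
  | base => exact h
  | succ k hk ih =>
    intro j hj hknows
    obtain ⟨j₀, hs, h0⟩ := seen0_of_knows hA hj hknows
    rcases seen_inv hs with heq | ⟨i', m2, hx, hcase⟩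
    · have : (0 : ℕ) = k + 1 := congrArg Prod.snd heq
      omega
    · rw [Prod.mk.injEq] at hx
      obtain ⟨h1, h2⟩ := hx
      have h2' : m2 = k := by omega
      subst h1
      rw [h2'] at hcase
      rcases hcase with hseen | ⟨q, hseen, hF⟩
      · exact ih j (active_mono (Nat.le_succ k) hj) (knows0_of_seen ⟨j₀, hseen, h0⟩)
      · exact ih q (active_of_F hF) (knows0_of_seen ⟨j₀, hseen, h0⟩)

lemma runDec_some {step : ℕ → Option Bool} {m : ℕ} {v : Bool}
    (h : runDec step m = some v) : ∃ k ≤ m, step k = some v := by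
  induction m with
  | zero => exact ⟨0, le_rfl, h⟩
  | succ m ih =>
    rw [runDec] at h
    cases hr : runDec step m with
    | none =>
      rw [hr] at h
      exact ⟨m + 1, le_rfl, h⟩
    | some w =>
      rw [hr] at h
      have hw : w = v := by simpa using h
      obtain ⟨k, hk, hs⟩ := ih (by rw [hr, hw])
      exact ⟨k, hk.trans (Nat.le_succ m), hs⟩

lemma runDec_ne_none {step : ℕ → Option Bool} {m : ℕ} (h : step m ≠ none) :
    runDec step m ≠ none := by
  cases m with
  | zero => exact h
  | succ m =>
    rw [runDec]
    cases hr : runDec step m with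
    | none => simpa using h
    | some w => simp

lemma opt0_decides {t : ℕ} {A : Adversary n} {i : Fin n} {m : ℕ} {v : Bool}
    (h : Opt0 n t A i m = some v) :
    ∃ k ≤ m, (v = false ∧ Knows t (existsVal false) A i k) ∨
      (v = true ∧ ¬ Knows t (existsVal false) A i k ∧ Knows t (notKnown0 t) A i k) := by
  have h' : runDec (fun m => if Knows t (existsVal false) A i m then some false
      else if Knows t (notKnown0 t) A i m then some true else none) m = some v := h
  obtain ⟨k, hk, hs⟩ := runDec_some h'
  refine ⟨k, hk, ?_⟩
  by_cases h1 : Knows t (existsVal false) A i k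
  · rw [if_pos h1] at hs
    exact Or.inl ⟨(Option.some.inj hs).symm, h1⟩
  · rw [if_neg h1] at hs
    by_cases h2 : Knows t (notKnown0 t) A i k
    · rw [if_pos h2] at hs
      exact Or.inr ⟨(Option.some.inj hs).symm, h1, h2⟩
    · rw [if_neg h2] at hs
      exact absurd hs (by simp)

end Opt0Aux

/-- `Opt₀` solves consensus: Decision (every correct process decides, by time `t+1`
at the latest), Validity and Agreement. -/
theorem opt0_solves_consensus (n t : ℕ) (ht : t < n) :
    ConsensusSolves t (Opt0 n t) ∧
    (∀ A : Adversary n, Valid t A → ∀ i : Fin n, ¬ A.Faulty i →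
      Opt0 n t A i (t + 1) ≠ none) := by
  have hn : 0 < n := Nat.lt_of_le_of_lt (Nat.zero_le t) ht
  have hdec : ∀ A : Adversary n, Valid t A → ∀ i : Fin n, ¬ A.Faulty i →
      Opt0 n t A i (t + 1) ≠ none := by
    intro A hA i hi
    have hact := active_of_not_faulty hi (t + 1)
    show runDec (fun m => if Knows t (existsVal false) A i m then some false
      else if Knows t (notKnown0 t) A i m then some true else none) (t + 1) ≠ none
    apply runDec_ne_none
    by_cases hK : Knows t (existsVal false) A i (t + 1)
    · simp only [if_pos hK]
      simp
    · have hKn := knows_notKnown0 hn hA hact hK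
      simp only [if_neg hK, if_pos hKn]
      simp
  refine ⟨⟨?_, ?_, ?_⟩, hdec⟩
  · -- Decision
    intro A hA i hi
    exact ⟨t + 1, hdec A hA i hi⟩
  · -- Validity
    intro A hA v hv i m w hi hw
    obtain ⟨k, hk, hcase⟩ := opt0_decides hw
    have hact := active_of_not_faulty hi k
    rcases hcase with ⟨hwf, hK⟩ | ⟨hwt, hnK, hKn⟩
    · obtain ⟨j, hj⟩ : ∃ j, A.init j = false := knows_self hA hact hK
      rw [hv j] at hj
      cases v
      · exact hwf
      · exact absurd hj (by simp)
    · cases v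
      · exact absurd (knows0_of_seen (t := t) ⟨i, seen_self0 i k, hv i⟩) hnK
      · exact hwt
  · -- Agreement
    intro A hA i j m m' v w hi hj hvi hwj
    have key : ∀ (i j : Fin n) (m m' : ℕ), ¬ A.Faulty i → ¬ A.Faulty j →
        Opt0 n t A i m = some false → Opt0 n t A j m' = some true → False := by
      intro i j m m' hi hj h0 h1
      obtain ⟨k1, _, hc1⟩ := opt0_decides h0
      obtain ⟨k2, _, hc2⟩ := opt0_decides h1
      rcases hc1 with ⟨_, hK0⟩ | ⟨hft, _⟩
      · rcases hc2 with ⟨htf, _⟩ | ⟨_, hnK, hKn⟩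
        · exact absurd htf (by simp)
        · have hact1 := active_of_not_faulty hi k1
          have hact2 := active_of_not_faulty hj k2
          have hnk : notKnown0 t A k2 := knows_self hA hact2 hKn
          obtain ⟨j₀, hs, hz⟩ := seen0_of_knows hA hact1 hK0
          have hnkK : notKnown0 t A (max k1 k2) :=
            notKnown0_mono hA (le_max_right _ _) hnk
          have hsK : Seen A (j₀, 0) (i, max k1 k2) := seen_mono hs (le_max_left _ _)
          exact hnkK i (active_of_not_faulty hi (max k1 k2))
            (knows0_of_seen ⟨j₀, hsK, hz⟩)
      · exact absurd hft (by simp)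
    cases v <;> cases w
    · rfl
    · exact (key i j m m' hi hj hvi hwj).elim
    · exact (key j i m' m hj hi hwj hvi).elim
    · rfl
end

section
/- Assume n > 2 and t > 0. Let Q be a consensus protocol dominating Opt_Maj and r = Q[α] a run. If at time 1 process i knows Maj = v (i.e., i has seen at least n/2 [for v=0], resp. strictly more than n/2 [for v=1], time-0 nodes with initial value v), then i decides v at or before time 1 in r. -/
attribute [local instance] Classical.propDecidable

open Adversary

section AuxLemmas

variable {n : ℕ}

lemma seen_zero {A : Adversary n} {p : Fin n × ℕ} {j : Fin n} (h : Seen A p (j, 0)) :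
    p = (j, 0) := by
  cases h
  rfl

lemma seen_one {A : Adversary n} {p : Fin n × ℕ} {i : Fin n} (h : Seen A p (i, 1)) :
    p = (i, 1) ∨ p = (i, 0) ∨ ∃ j, p = (j, 0) ∧ A.F 0 j i := by
  cases h with
  | refl => exact Or.inl rfl
  | self h => exact Or.inr (Or.inl (seen_zero h))
  | step h hF => exact Or.inr (Or.inr ⟨_, seen_zero h, hF⟩)

lemma active_F {A : Adversary n} {i : Fin n} (h : A.Active i 1) : ∀ j, A.F 0 i j :=
  fun j => A.before_crash 0 i j (by exact_mod_cast h)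

lemma seen_one_iff {A : Adversary n} {i j : Fin n} (hi : A.Active i 1) :
    Seen A (j, 0) (i, 1) ↔ (A.F 0 j i ∨ j = i) := by
  constructor
  · intro h
    rcases seen_one h with h1 | h1 | ⟨j', h1, hf⟩
    · simp at h1
    · exact Or.inr (congrArg Prod.fst h1)
    · obtain ⟨rfl, -⟩ : j = j' ∧ (0:ℕ) = 0 := by simpa [Prod.ext_iff] using h1
      exact Or.inl hf
  · rintro (hf | rfl)
    · exact Seen.step (Seen.refl _) hf
    · exact Seen.self (Seen.refl _)

lemma seen_congr {A B : Adversary n} (hF : ∀ m j i, A.F m j i ↔ B.F m j i)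
    {p q : Fin n × ℕ} (h : Seen A p q) : Seen B p q := by
  induction h with
  | refl => exact Seen.refl _
  | self _ ih => exact Seen.self ih
  | step _ hf ih => exact Seen.step ih ((hF _ _ _).1 hf)

lemma sameLocal_one {A B : Adversary n} {i : Fin n}
    (hA : A.Active i 1) (hB : B.Active i 1)
    (hF : ∀ j, A.F 0 j i ↔ B.F 0 j i)
    (hinit : ∀ j, Seen A (j, 0) (i, 1) → A.init j = B.init j) :
    sameLocal A B i 1 := by
  refine ⟨hA, hB, ?_, hinit, ?_⟩
  · intro p
    constructor
    · intro h
      rcases seen_one h with rfl | rfl | ⟨j, rfl, hf⟩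
      · exact Seen.refl _
      · exact Seen.self (Seen.refl _)
      · exact Seen.step (Seen.refl _) ((hF j).1 hf)
    · intro h
      rcases seen_one h with rfl | rfl | ⟨j, rfl, hf⟩
      · exact Seen.refl _
      · exact Seen.self (Seen.refl _)
      · exact Seen.step (Seen.refl _) ((hF j).2 hf)
  · intro k j j' h
    rcases seen_one h with h1 | h1 | ⟨j'', h1, -⟩
    · obtain ⟨rfl, hk⟩ : j' = i ∧ k + 1 = 1 := by simpa [Prod.ext_iff] using h1
      obtain rfl : k = 0 := by omega
      exact hF j
    · exact absurd h1 (by simp)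
    · exact absurd h1 (by simp [Prod.ext_iff])

/-- number of time-0 nodes with value `v` seen by `⟨i,1⟩`. -/
noncomputable def cnt (v : Bool) (A : Adversary n) (i : Fin n) : ℕ :=
  (Finset.univ.filter fun j => Seen A (j, 0) (i, 1) ∧ A.init j = v).card

/-- the majority-threshold condition on the seen values. -/
def Thr (v : Bool) (A : Adversary n) (i : Fin n) : Prop :=
  if v then n < 2 * cnt true A i else n ≤ 2 * cnt false A i

lemma knows_of_thr {t : ℕ} {A : Adversary n} {i : Fin n} {v : Bool} (h : Thr v A i) :
    Knows t (if v then Maj1 n else Maj0 n) A i 1 := by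
  intro B hB hloc
  obtain ⟨-, -, hseen, hinit, -⟩ := hloc
  have hcard : cnt v A i ≤ (Finset.univ.filter fun j => B.init j = v).card := by
    apply Finset.card_le_card
    intro j hj
    simp only [Finset.mem_filter, Finset.mem_univ, true_and] at hj ⊢
    rw [← hinit j hj.1]; exact hj.2
  cases v with
  | false =>
    show n ≤ 2 * zeros B
    simp only [Thr, if_neg Bool.false_ne_true] at h
    calc n ≤ 2 * cnt false A i := h
      _ ≤ 2 * zeros B := by unfold zeros; omega
  | true =>
    show n < 2 * ones B
    simp only [Thr, if_pos rfl] at h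
    calc n < 2 * cnt true A i := h
      _ ≤ 2 * ones B := by unfold ones; omega

lemma thr_of_knows {t : ℕ} {A : Adversary n} {i : Fin n} {v : Bool}
    (hA : Valid t A) (hact : A.Active i 1)
    (hk : Knows t (if v then Maj1 n else Maj0 n) A i 1) : Thr v A i := by
  classical
  set B : Adversary n :=
    { A with init := fun j => if Seen A (j, 0) (i, 1) then A.init j else !v } with hBdef
  have hBF : ∀ m j i', A.F m j i' ↔ B.F m j i' := fun _ _ _ => Iff.rfl
  have hBvalid : Valid t B := hA
  have hloc : sameLocal A B i 1 := by
    refine sameLocal_one hact hact (fun j => Iff.rfl) ?_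
    intro j hj
    show A.init j = if Seen A (j, 0) (i, 1) then A.init j else !v
    rw [if_pos hj]
  have := hk B hBvalid hloc
  have hcnt : (Finset.univ.filter fun j => B.init j = v).card = cnt v A i := by
    unfold cnt
    congr 1
    ext j
    simp only [Finset.mem_filter, Finset.mem_univ, true_and]
    constructor
    · intro hj
      by_cases hs : Seen A (j, 0) (i, 1)
      · refine ⟨hs, ?_⟩
        simpa [hBdef, hs] using hj
      · exfalso
        simp only [hBdef, if_neg hs] at hj
        cases v <;> simp_all
    · intro ⟨hs, hv⟩
      simp [hBdef, hs, hv]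
  cases v with
  | false =>
    show n ≤ 2 * cnt false A i
    have : n ≤ 2 * zeros B := this
    unfold zeros at this; omega
  | true =>
    show n < 2 * cnt true A i
    have : n < 2 * ones B := this
    unfold ones at this; omega

lemma runDec_one (step : ℕ → Option Bool) :
    runDec step 1 = (step 0).elim (step 1) some := rfl

lemma elim_none {α : Type} {o y : Option α} (h : o.elim y some = none) : y = none := by
  cases o with
  | none => exact h
  | some a => simp at h

lemma optmaj_ne_none {t : ℕ} {A : Adversary n} {i : Fin n} {v : Bool}
    (hk : Knows t (if v then Maj1 n else Maj0 n) A i 1) : OptMaj n t A i 1 ≠ none := by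
  intro hnone
  have h1 : runDec (fun m =>
      if Knows t (Maj0 n) A i m then some false
      else if Knows t (Maj1 n) A i m then some true
      else if ∃ k ≤ m, RevealedTime A k i m then some (MajSeen A i m)
      else none) 1 = none := hnone
  rw [runDec_one] at h1
  have h2 := elim_none h1
  split_ifs at h2 with ha hb
  cases v with
  | false => exact ha hk
  | true => exact hb hk

end AuxLemmas
section MkAdv

variable {n : ℕ}

/-- Build an adversary where each process in `crashed` crashes in round 1, delivering
its round-1 message exactly to `deliv`, and all other processes are correct. -/
noncomputable def mkAdv (ini : Fin n → Bool) (crashed : Fin n → Prop)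
    (deliv : Fin n → Fin n → Prop) : Adversary n where
  init := ini
  F := fun m j i => if crashed j then m = 0 ∧ deliv j i else True
  crash := fun j => if crashed j then 1 else ⊤
  crash_pos := fun j => by split <;> simp
  before_crash := fun m j i h => by
    by_cases hc : crashed j
    · rw [if_pos hc] at h
      exact absurd (by exact_mod_cast h : m + 1 < 1) (by omega)
    · simp [hc]
  after_crash := fun m j i h => by
    by_cases hc : crashed j
    · rw [if_pos hc] at h
      have hm : 1 < m + 1 := by exact_mod_cast h
      simp only [if_pos hc, not_and]
      intro hm0
      omega
    · rw [if_neg hc] at h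
      exact absurd h (by simp)

lemma mkAdv_F {ini : Fin n → Bool} {crashed : Fin n → Prop} {deliv : Fin n → Fin n → Prop}
    (m : ℕ) (j i : Fin n) :
    (mkAdv ini crashed deliv).F m j i ↔ (crashed j → (m = 0 ∧ deliv j i)) := by
  show (if crashed j then m = 0 ∧ deliv j i else True) ↔ _
  split_ifs with hc <;> simp [hc]

lemma mkAdv_faulty {ini : Fin n → Bool} {crashed : Fin n → Prop}
    {deliv : Fin n → Fin n → Prop} (j : Fin n) :
    (mkAdv ini crashed deliv).Faulty j ↔ crashed j := by
  show (if crashed j then (1:ℕ∞) else ⊤) ≠ ⊤ ↔ _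
  split_ifs with hc <;> simp [hc]

lemma mkAdv_numFaults {ini : Fin n → Bool} {crashed : Fin n → Prop}
    {deliv : Fin n → Fin n → Prop} :
    (mkAdv ini crashed deliv).numFaults = {j | crashed j}.ncard := by
  unfold Adversary.numFaults
  congr 1
  ext j
  exact mkAdv_faulty j

lemma mkAdv_active {ini : Fin n → Bool} {crashed : Fin n → Prop}
    {deliv : Fin n → Fin n → Prop} {i : Fin n} (h : ¬ crashed i) (m : ℕ) :
    (mkAdv ini crashed deliv).Active i m := by
  show ((m : ℕ) : ℕ∞) < (if crashed i then 1 else ⊤)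
  rw [if_neg h]
  exact Ne.lt_top (by simp)

lemma mkAdv_not_faulty {ini : Fin n → Bool} {crashed : Fin n → Prop}
    {deliv : Fin n → Fin n → Prop} {i : Fin n} (h : ¬ crashed i) :
    ¬ (mkAdv ini crashed deliv).Faulty i := fun hf => h ((mkAdv_faulty i).1 hf)

end MkAdv
section Helpers

variable {n : ℕ}

lemma seen_iff_F {A : Adversary n} {i j : Fin n} (h : A.Active i 1) :
    Seen A (j, 0) (i, 1) ↔ A.F 0 j i := by
  rw [seen_one_iff h]
  constructor
  · rintro (hf | rfl)
    · exact hf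
    · exact active_F h j
  · exact Or.inl

lemma faulty_of_not_F {A : Adversary n} {i j : Fin n} (h : ¬ A.F 0 j i) : A.Faulty j := by
  intro htop
  exact h (A.before_crash 0 j i (by rw [htop]; exact Ne.lt_top (by simp)))

lemma thr_mono {A B : Adversary n} {i i' : Fin n} {v : Bool}
    (h : Thr v A i) (hle : cnt v A i ≤ cnt v B i') : Thr v B i' := by
  unfold Thr at *
  cases v <;> simp only [if_true, if_false, Bool.false_eq_true] at * <;> omega

lemma two_le_cnt {A : Adversary n} {i : Fin n} {v : Bool} (hn : 2 < n) (h : Thr v A i) :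
    2 ≤ cnt v A i := by
  unfold Thr at h
  cases v <;> simp only [if_true, if_false, Bool.false_eq_true] at h <;> omega

lemma thr_of_nsub1 {B : Adversary n} {i' : Fin n} {v : Bool} (hn : 2 < n)
    (h : n - 1 ≤ cnt v B i') : Thr v B i' := by
  unfold Thr
  cases v <;> simp only [if_true, if_false, Bool.false_eq_true] <;> omega

lemma exists_third (hn : 2 < n) (a b : Fin n) : ∃ c : Fin n, c ≠ a ∧ c ≠ b := by
  by_contra h
  push_neg at h
  have hsub : (Finset.univ : Finset (Fin n)) ⊆ {a, b} := by
    intro c _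
    rcases Classical.em (c = a) with rfl | hca
    · simp
    · simp [h c hca]
  have := Finset.card_le_card hsub
  simp only [Finset.card_univ, Fintype.card_fin] at this
  have h2 : ({a, b} : Finset (Fin n)).card ≤ 2 :=
    le_trans (Finset.card_insert_le _ _) (by simp)
  omega

lemma cnt_ge_of_subset {B : Adversary n} {i' : Fin n} {v : Bool} {s : Finset (Fin n)}
    (h : ∀ j ∈ s, Seen B (j, 0) (i', 1) ∧ B.init j = v) : s.card ≤ cnt v B i' :=
  Finset.card_le_card fun j hj => Finset.mem_filter.2 ⟨Finset.mem_univ j, h j hj⟩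

lemma key_full (n t : ℕ) (hn : 2 < n)
    (Q : ProtoDec n) (hQ : IsProtocol t Q) (hC : ConsensusSolves t Q)
    (hdom : Dominates t Q (OptMaj n t)) (A : Adversary n) (hA : Valid t A)
    (i : Fin n) (v : Bool) (hact : A.Active i 1) (hth : Thr v A i)
    (hfull : n ≤ cnt v A i) : Q A i 1 = some v := by
  have huniv : (Finset.univ.filter fun j => Seen A (j, 0) (i, 1) ∧ A.init j = v)
      = Finset.univ := by
    apply Finset.eq_univ_of_card
    refine le_antisymm (le_trans (Finset.card_le_card (Finset.filter_subset _ _)) (by simp)) ?_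
    simpa [Finset.card_univ, cnt] using hfull
  have hallv : ∀ j : Fin n, Seen A (j, 0) (i, 1) ∧ A.init j = v := by
    intro j
    have := huniv ▸ Finset.mem_univ j
    exact (Finset.mem_filter.1 this).2
  set B0 : Adversary n := mkAdv A.init (fun _ => False) (fun _ _ => True) with hB0
  have hB0valid : Valid t B0 := by
    show B0.numFaults ≤ t
    rw [hB0, mkAdv_numFaults]
    simp
  have hloc : sameLocal A B0 i 1 := by
    refine sameLocal_one hact (mkAdv_active not_false 1) ?_ (fun _ _ => rfl)
    intro j
    rw [hB0, mkAdv_F]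
    simp only [false_implies, iff_true]
    exact (seen_iff_F hact).1 (hallv j).1
  have heq : Q A i 1 = Q B0 i 1 := hQ.2 A B0 i 1 hA hB0valid hloc
  have hne : Q A i 1 ≠ none := hdom A hA i 1 (optmaj_ne_none (knows_of_thr hth))
  obtain ⟨w, hw⟩ : ∃ w, Q A i 1 = some w := Option.ne_none_iff_exists'.1 hne
  have hw' : w = v := by
    refine hC.2.1 B0 hB0valid v ?_ i 1 w (by refine mkAdv_not_faulty ?_; exact not_false : _) (heq ▸ hw)
    exact fun j => (hallv j).2
  rw [hw, hw']

end Helpers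
lemma key_main (n t : ℕ) (hn : 2 < n) (h0 : 0 < t)
    (Q : ProtoDec n) (hQ : IsProtocol t Q) (hC : ConsensusSolves t Q)
    (hdom : Dominates t Q (OptMaj n t)) :
    ∀ (d : ℕ) (A : Adversary n), Valid t A → ∀ (i : Fin n) (v : Bool), A.Active i 1 →
      Thr v A i → n ≤ cnt v A i + d → Q A i 1 = some v := by
  have qne : ∀ (A : Adversary n) (i : Fin n) (v : Bool), Valid t A → Thr v A i →
      Q A i 1 ≠ none := fun A i v hA hth =>
    hdom A hA i 1 (optmaj_ne_none (knows_of_thr hth))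
  intro d
  induction d with
  | zero =>
    intro A hA i v hact hth hc
    exact key_full n t hn Q hQ hC hdom A hA i v hact hth (by omega)
  | succ d ih =>
    intro A hA i v hact hth hcd
    by_cases hfull : n ≤ cnt v A i
    · exact key_full n t hn Q hQ hC hdom A hA i v hact hth hfull
    by_cases hall : ∀ j, Seen A (j, 0) (i, 1)
    · -- all time-0 nodes are seen by i
      have hAF : ∀ j, A.F 0 j i := fun j => (seen_iff_F hact).1 (hall j)
      have ncard1 : ∀ a : Fin n, ({j : Fin n | j = a}).ncard = 1 := fun a => by
        rw [Set.setOf_eq_eq_singleton, Set.ncard_singleton]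
      by_cases hex : ∃ j0, j0 ≠ i ∧ A.init j0 ≠ v
      · -- some process other than i holds the minority value
        obtain ⟨j0, hj0i, hj0v⟩ := hex
        have hine : i ≠ j0 := Ne.symm hj0i
        set B : Adversary n := mkAdv A.init (fun j => j = j0) (fun _ r => r = i) with hB
        set B2 : Adversary n := mkAdv (fun j => if j = j0 then v else A.init j)
          (fun j => j = j0) (fun _ r => r = i) with hB2
        have hBvalid : Valid t B := by
          show B.numFaults ≤ t
          rw [hB, mkAdv_numFaults, ncard1]
          omega
        have hB2valid : Valid t B2 := by
          show B2.numFaults ≤ t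
          rw [hB2, mkAdv_numFaults, ncard1]
          omega
        have hBact : B.Active i 1 := by refine mkAdv_active ?_ 1; exact hine
        have hB2act : B2.Active i 1 := by refine mkAdv_active ?_ 1; exact hine
        obtain ⟨i', hi'i, hi'j0⟩ := exists_third hn i j0
        have hB'act : B.Active i' 1 := by refine mkAdv_active ?_ 1; exact hi'j0
        have hB2'act : B2.Active i' 1 := by refine mkAdv_active ?_ 1; exact hi'j0
        have hBF : ∀ j, A.F 0 j i ↔ B.F 0 j i := by
          intro j
          rw [hB, mkAdv_F]
          simp [hAF j]
        have hloc : sameLocal A B i 1 := sameLocal_one hact hBact hBF (fun _ _ => rfl)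
        have hseenB' : ∀ j, Seen B (j, 0) (i', 1) ↔ j ≠ j0 := by
          intro j
          rw [seen_one_iff hB'act, hB, mkAdv_F]
          constructor
          · rintro (h | rfl)
            · intro hjj; exact hi'i (h hjj).2
            · exact hi'j0
          · intro hne
            exact Or.inl (fun hj => absurd hj hne)
        have hseenB2' : ∀ j, Seen B2 (j, 0) (i', 1) ↔ j ≠ j0 := by
          intro j
          rw [seen_one_iff hB2'act, hB2, mkAdv_F]
          constructor
          · rintro (h | rfl)
            · intro hjj; exact hi'i (h hjj).2
            · exact hi'j0
          · intro hne
            exact Or.inl (fun hj => absurd hj hne)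
        have hlocB : sameLocal B B2 i' 1 := by
          refine sameLocal_one hB'act hB2'act ?_ ?_
          · intro j
            rw [hB, hB2, mkAdv_F, mkAdv_F]
          · intro j hj
            have hne := (hseenB' j).1 hj
            show A.init j = if j = j0 then v else A.init j
            rw [if_neg hne]
        have hQBB2 : Q B i' 1 = Q B2 i' 1 := hQ.2 B B2 i' 1 hBvalid hB2valid hlocB
        have hseenB2 : ∀ j, Seen B2 (j, 0) (i, 1) := fun j => by
          rw [seen_one_iff hB2act, hB2, mkAdv_F]
          exact Or.inl (fun _ => ⟨rfl, rfl⟩)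
        have hcnt2 : cnt v A i + 1 ≤ cnt v B2 i := by
          have hj0mem : j0 ∉ (Finset.univ.filter fun j =>
              Seen A (j, 0) (i, 1) ∧ A.init j = v) := by simp [hj0v]
          have hins : cnt v A i + 1 = (insert j0 (Finset.univ.filter fun j =>
              Seen A (j, 0) (i, 1) ∧ A.init j = v)).card := by
            rw [Finset.card_insert_of_notMem hj0mem]
            rfl
          rw [hins]
          refine cnt_ge_of_subset ?_
          intro j hj
          rcases Finset.mem_insert.1 hj with h | hj
          · refine ⟨hseenB2 j, ?_⟩
            show (if j = j0 then v else A.init j) = v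
            rw [if_pos h]
          · simp only [Finset.mem_filter, Finset.mem_univ, true_and] at hj
            have hjne : j ≠ j0 := fun h => hj0v (h ▸ hj.2)
            refine ⟨hseenB2 j, ?_⟩
            show (if j = j0 then v else A.init j) = v
            rw [if_neg hjne]
            exact hj.2
        have hQB2i : Q B2 i 1 = some v :=
          ih B2 hB2valid i v hB2act (thr_mono hth (by omega)) (by omega)
        have hcnt2' : cnt v A i ≤ cnt v B2 i' := by
          refine cnt_ge_of_subset ?_
          intro j hj
          simp only [Finset.mem_filter, Finset.mem_univ, true_and] at hj
          have hjne : j ≠ j0 := fun h => hj0v (h ▸ hj.2)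
          refine ⟨(hseenB2' j).2 hjne, ?_⟩
          show (if j = j0 then v else A.init j) = v
          rw [if_neg hjne]
          exact hj.2
        obtain ⟨u, hu⟩ := Option.ne_none_iff_exists'.1
          (qne B2 i' v hB2valid (thr_mono hth hcnt2'))
        have huv : u = v := hC.2.2 B2 hB2valid i' i 1 1 u v
          (by refine mkAdv_not_faulty ?_; exact hi'j0 : _) (by refine mkAdv_not_faulty ?_; exact hine : _) hu hQB2i
        have heq : Q A i 1 = Q B i 1 := hQ.2 A B i 1 hA hBvalid hloc
        obtain ⟨w, hw⟩ := Option.ne_none_iff_exists'.1 (qne A i v hA hth)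
        have hQBi' : Q B i' 1 = some v := by rw [hQBB2, hu, huv]
        have hwv : w = v := hC.2.2 B hBvalid i i' 1 1 w v
          (by refine mkAdv_not_faulty ?_; exact hine : _) (by refine mkAdv_not_faulty ?_; exact hi'j0 : _) (heq ▸ hw) hQBi'
        rw [hw, hwv]
      · -- i is the only process with the minority value
        push_neg at hex
        obtain ⟨i', hi'i, -⟩ := exists_third hn i i
        obtain ⟨i'', hi''i, hi''i'⟩ := exists_third hn i i'
        set B0 : Adversary n := mkAdv A.init (fun _ => False) (fun _ _ => True) with hB0
        set D : Adversary n := mkAdv A.init (fun j => j = i) (fun _ r => r ≠ i'') with hD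
        set D2 : Adversary n := mkAdv (fun _ => v) (fun j => j = i) (fun _ r => r ≠ i'')
          with hD2
        have hB0valid : Valid t B0 := by
          show B0.numFaults ≤ t
          rw [hB0, mkAdv_numFaults]
          simp
        have hDvalid : Valid t D := by
          show D.numFaults ≤ t
          rw [hD, mkAdv_numFaults, ncard1]
          omega
        have hD2valid : Valid t D2 := by
          show D2.numFaults ≤ t
          rw [hD2, mkAdv_numFaults, ncard1]
          omega
        have hB0acti : B0.Active i 1 := by refine mkAdv_active ?_ 1; exact not_false
        have hB0act' : B0.Active i' 1 := by refine mkAdv_active ?_ 1; exact not_false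
        have hDact' : D.Active i' 1 := by refine mkAdv_active ?_ 1; exact hi'i
        have hDact'' : D.Active i'' 1 := by refine mkAdv_active ?_ 1; exact hi''i
        have hD2act'' : D2.Active i'' 1 := by refine mkAdv_active ?_ 1; exact hi''i
        have hloc0 : sameLocal A B0 i 1 := by
          refine sameLocal_one hact hB0acti ?_ (fun _ _ => rfl)
          intro j
          rw [hB0, mkAdv_F]
          simp [hAF j]
        have heq : Q A i 1 = Q B0 i 1 := hQ.2 A B0 i 1 hA hB0valid hloc0
        have hlocD : sameLocal B0 D i' 1 := by
          refine sameLocal_one hB0act' hDact' ?_ (fun _ _ => rfl)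
          intro j
          rw [hB0, hD, mkAdv_F, mkAdv_F]
          simp [Ne.symm hi''i']
        have hQB0D : Q B0 i' 1 = Q D i' 1 := hQ.2 B0 D i' 1 hB0valid hDvalid hlocD
        have hcntB0 : n - 1 ≤ cnt v B0 i' := by
          have hcard : (Finset.univ.erase i).card = n - 1 := by
            rw [Finset.card_erase_of_mem (Finset.mem_univ i), Finset.card_univ,
              Fintype.card_fin]
          rw [← hcard]
          refine cnt_ge_of_subset ?_
          intro j hj
          have hjne : j ≠ i := Finset.ne_of_mem_erase hj
          refine ⟨?_, hex j hjne⟩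
          rw [seen_one_iff hB0act', hB0, mkAdv_F]
          exact Or.inl (fun h => h.elim)
        obtain ⟨w', hw'⟩ := Option.ne_none_iff_exists'.1
          (qne B0 i' v hB0valid (thr_of_nsub1 hn hcntB0))
        have hlocD2 : sameLocal D D2 i'' 1 := by
          refine sameLocal_one hDact'' hD2act'' ?_ ?_
          · intro j
            rw [hD, hD2, mkAdv_F, mkAdv_F]
          · intro j hj
            rw [seen_one_iff hDact'', hD, mkAdv_F] at hj
            have hjne : j ≠ i := by
              rcases hj with h | h2
              · intro hji
                exact (h hji).2 rfl
              · rw [h2]; exact hi''i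
            show A.init j = v
            exact hex j hjne
        have hQDD2 : Q D i'' 1 = Q D2 i'' 1 := hQ.2 D D2 i'' 1 hDvalid hD2valid hlocD2
        have hcntD2 : n - 1 ≤ cnt v D2 i'' := by
          have hcard : (Finset.univ.erase i).card = n - 1 := by
            rw [Finset.card_erase_of_mem (Finset.mem_univ i), Finset.card_univ,
              Fintype.card_fin]
          rw [← hcard]
          refine cnt_ge_of_subset ?_
          intro j hj
          have hjne : j ≠ i := Finset.ne_of_mem_erase hj
          refine ⟨?_, rfl⟩
          rw [seen_one_iff hD2act'', hD2, mkAdv_F]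
          exact Or.inl (fun h => absurd h hjne)
        obtain ⟨u, hu⟩ := Option.ne_none_iff_exists'.1
          (qne D2 i'' v hD2valid (thr_of_nsub1 hn hcntD2))
        have huv : u = v := hC.2.1 D2 hD2valid v (fun _ => rfl) i'' 1 u
          (by refine mkAdv_not_faulty ?_; exact hi''i : _) hu
        have hQDi'' : Q D i'' 1 = some v := by rw [hQDD2, hu, huv]
        have hQDi' : Q D i' 1 = some w' := by rw [← hQB0D]; exact hw'
        have hw'v : w' = v := hC.2.2 D hDvalid i' i'' 1 1 w' v
          (by refine mkAdv_not_faulty ?_; exact hi'i : _) (by refine mkAdv_not_faulty ?_; exact hi''i : _) hQDi' hQDi''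
        obtain ⟨w, hw⟩ := Option.ne_none_iff_exists'.1 (qne A i v hA hth)
        have hQB0i' : Q B0 i' 1 = some v := by rw [hw', hw'v]
        have hwv : w = v := hC.2.2 B0 hB0valid i i' 1 1 w v
          (by refine mkAdv_not_faulty ?_; exact not_false : _) (by refine mkAdv_not_faulty ?_; exact not_false : _) (heq ▸ hw) hQB0i'
        rw [hw, hwv]
    · -- some time-0 node is not seen by i
      push_neg at hall
      obtain ⟨j0, hj0⟩ := hall
      set ini : Fin n → Bool := fun j => if Seen A (j, 0) (i, 1) then A.init j else v
        with hini
      set B : Adversary n :=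
        mkAdv ini (fun j => ¬ Seen A (j, 0) (i, 1)) (fun _ r => r ≠ i) with hB
      have hseeni : Seen A (i, 0) (i, 1) := Seen.self (Seen.refl _)
      have hBact : B.Active i 1 := by refine mkAdv_active ?_ 1; exact (not_not_intro hseeni)
      have hBvalid : Valid t B := by
        show B.numFaults ≤ t
        rw [hB, mkAdv_numFaults]
        refine le_trans (Set.ncard_le_ncard ?_ (Set.toFinite _)) hA
        intro j (hj : ¬ Seen A (j, 0) (i, 1))
        exact faulty_of_not_F (fun hf => hj ((seen_iff_F hact).2 hf))
      have hBF : ∀ j, A.F 0 j i ↔ B.F 0 j i := by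
        intro j
        rw [hB, mkAdv_F, ← seen_iff_F hact]
        by_cases hs : Seen A (j, 0) (i, 1) <;> simp [hs]
      have hloc : sameLocal A B i 1 := by
        refine sameLocal_one hact hBact hBF ?_
        intro j hj
        show A.init j = ini j
        rw [hini]
        simp [hj]
      -- pick a process i' ≠ i seen by i with value v
      have h2c : 2 ≤ cnt v A i := two_le_cnt hn hth
      obtain ⟨i', hi'mem, hi'ne⟩ :=
        Finset.exists_mem_ne
          (s := Finset.univ.filter fun j => Seen A (j, 0) (i, 1) ∧ A.init j = v)
          (lt_of_lt_of_le one_lt_two h2c) i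
      simp only [Finset.mem_filter, Finset.mem_univ, true_and] at hi'mem
      have hi'ncr : ¬ ¬ Seen A (i', 0) (i, 1) := not_not_intro hi'mem.1
      have hB'act : B.Active i' 1 := by refine mkAdv_active ?_ 1; exact hi'ncr
      have hBseen : ∀ j, Seen B (j, 0) (i', 1) := by
        intro j
        rw [seen_one_iff hB'act, hB, mkAdv_F]
        exact Or.inl (fun _ => ⟨rfl, hi'ne⟩)
      -- i' sees at least cnt v A i + 1 values v in B
      have hcnt' : cnt v A i + 1 ≤ cnt v B i' := by
        have hins : (cnt v A i) + 1 =
            (insert j0 (Finset.univ.filter fun j => Seen A (j, 0) (i, 1) ∧ A.init j = v)).card := by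
          rw [Finset.card_insert_of_notMem (by simp [hj0])]
          rfl
        rw [hins]
        refine cnt_ge_of_subset ?_
        intro j hj
        rcases Finset.mem_insert.1 hj with rfl | hj
        · exact ⟨hBseen j, by show ini j = v; rw [hini]; simp [hj0]⟩
        · simp only [Finset.mem_filter, Finset.mem_univ, true_and] at hj
          exact ⟨hBseen j, by show ini j = v; rw [hini]; simp [hj.1, hj.2]⟩
      have hQB' : Q B i' 1 = some v :=
        ih B hBvalid i' v hB'act (thr_mono hth (by omega)) (by omega)
      have heq : Q A i 1 = Q B i 1 := hQ.2 A B i 1 hA hBvalid hloc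
      obtain ⟨w, hw⟩ : ∃ w, Q A i 1 = some w :=
        Option.ne_none_iff_exists'.1 (qne A i v hA hth)
      have hwv : w = v := hC.2.2 B hBvalid i i' 1 1 w v
        (by refine mkAdv_not_faulty ?_; exact (not_not_intro hseeni) : _) (by refine mkAdv_not_faulty ?_; exact hi'ncr : _)
        (heq ▸ hw) hQB'
      rw [hw, hwv]

/-- In any consensus protocol `Q` dominating `Opt_Maj` (with `n > 2`, `t > 0`):
if at time 1 process `i` knows `Maj = v`, then `i` decides `v` at or before time 1. -/
theorem optmaj_dominating_decides_at_one (n t : ℕ) (hn : 2 < n) (h0 : 0 < t) (ht : t < n)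
    (Q : ProtoDec n) (hQ : IsProtocol t Q) (hC : ConsensusSolves t Q)
    (hdom : Dominates t Q (OptMaj n t)) :
    ∀ A : Adversary n, Valid t A → ∀ (i : Fin n) (v : Bool), A.Active i 1 →
      Knows t (if v then Maj1 n else Maj0 n) A i 1 → Q A i 1 = some v := by
  intro A hA i v hact hk
  have hth : Thr v A i := thr_of_knows hA hact hk
  exact key_main n t hn h0 Q hQ hC hdom n A hA i v hact hth (by omega)
end
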